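/- There is a universal constant C_1 such that the following holds. Let m ≥ 2, k ≥ 1 be integers, δ_1, …, δ_m ≥ 0, and let X_1, …, X_m be real random variables on a common probability space (no independence assumed) with X_i distributed as a noncentral chi-squared variable with k degrees of freedom and noncentrality δ_i², i.e., X_i has the same law as (Z_1 + δ_i)² + Z_2² + ⋯ + Z_k² where Z_1, …, Z_k are independent standard Gaussians. Let δ_min = min_i δ_i and δ_max = max_i δ_i. Then for any C > C_1 with k ≥ 16 C log m: (a) if δ_min ≥ 2√(C log m), then P( min_{1≤i≤m} X_i < δ_min²/4 + k − 3√(C k log m) ) ≤ 2 m^{1−C/2}; (b) if δ_max ≤ √(C log m), then P( max_{1≤i≤m} X_i > k + 3√(C k log m) ) ≤ m^{1−C/2}. -/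

import Mathlib

open MeasureTheory ProbabilityTheory
open scoped ENNReal NNReal

noncomputable section

/-- The noncentral chi-squared law with `k` degrees of freedom and noncentrality `δ²`:
the law of `(Z_1 + δ)² + Z_2² + ⋯ + Z_k²` for independent standard Gaussians `Z_j`. -/
def ncChiSqLaw (k : ℕ) (δ : ℝ) : Measure ℝ :=
  Measure.map (fun z : Fin k → ℝ => ∑ j, (z j + if (j : ℕ) = 0 then δ else 0) ^ 2)
    (Measure.pi fun _ : Fin k => gaussianReal 0 1)

section Aux

open Real

lemma nc_gauss_shift_integral {b : ℝ} (hb : 0 < b) (c : ℝ) :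
    ∫ x : ℝ, Real.exp (-b * (x - c)^2) = Real.sqrt (π / b) := by
  rw [← integral_gaussian b]
  exact integral_sub_right_eq_self (fun x => Real.exp (-b * x ^ 2)) c

lemma nc_factor_pointwise {t : ℝ} (ht : t < 1/2) (a x : ℝ) :
    Real.exp (t * (x + a)^2) * gaussianPDFReal 0 1 x
      = (Real.sqrt (2*π))⁻¹ * Real.exp (t*a^2/(1-2*t))
          * Real.exp (-(1/2 - t) * (x - t*a/(1/2-t))^2) := by
  have hb : (0:ℝ) < 1/2 - t := by linarith
  have h2t : (1:ℝ) - 2*t ≠ 0 := by linarith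
  rw [gaussianPDFReal]
  push_cast
  rw [mul_comm (Real.exp _), mul_assoc, ← Real.exp_add]
  rw [mul_assoc ((Real.sqrt (2*π))⁻¹), ← Real.exp_add]
  norm_num
  field_simp
  ring_nf
  simp

lemma nc_gaussianReal_integral_eq (g : ℝ → ℝ) :
    ∫ x, g x ∂(gaussianReal 0 1) = ∫ x, g x * gaussianPDFReal 0 1 x := by
  rw [gaussianReal_of_var_ne_zero _ one_ne_zero]
  have h : (gaussianPDF 0 1) = fun x => (((gaussianPDFReal 0 1 x).toNNReal : ℝ≥0) : ENNReal) := by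
    ext x; rfl
  rw [h, integral_withDensity_eq_integral_smul
    ((measurable_gaussianPDFReal 0 1).real_toNNReal)]
  congr 1
  ext x
  rw [NNReal.smul_def, smul_eq_mul, Real.coe_toNNReal _ (gaussianPDFReal_nonneg 0 1 x), mul_comm]

lemma nc_gaussianReal_integrable_iff (g : ℝ → ℝ) :
    Integrable g (gaussianReal 0 1) ↔
      Integrable (fun x => g x * gaussianPDFReal 0 1 x) volume := by
  rw [gaussianReal_of_var_ne_zero _ one_ne_zero]
  have h : (gaussianPDF 0 1) = fun x => (((gaussianPDFReal 0 1 x).toNNReal : ℝ≥0) : ENNReal) := by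
    ext x; rfl
  rw [h, integrable_withDensity_iff_integrable_smul
    ((measurable_gaussianPDFReal 0 1).real_toNNReal)]
  constructor <;> intro h' <;> refine h'.congr (ae_of_all _ fun x => ?_) <;>
    simp only [NNReal.smul_def, smul_eq_mul,
      Real.coe_toNNReal _ (gaussianPDFReal_nonneg 0 1 x), mul_comm]

lemma nc_factor_integrable {t : ℝ} (ht : t < 1/2) (a : ℝ) :
    Integrable (fun z => Real.exp (t * (z + a)^2)) (gaussianReal 0 1) := by
  have hb : (0:ℝ) < 1/2 - t := by linarith
  rw [nc_gaussianReal_integrable_iff]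
  have h : (fun x => Real.exp (t * (x + a)^2) * gaussianPDFReal 0 1 x)
      = fun x => ((Real.sqrt (2*π))⁻¹ * Real.exp (t*a^2/(1-2*t)))
          * Real.exp (-(1/2 - t) * (x - t*a/(1/2-t))^2) := by
    ext x; rw [nc_factor_pointwise ht a x]
  rw [h]
  exact (((integrable_exp_neg_mul_sq hb).comp_sub_right (t*a/(1/2-t)))).const_mul _

lemma nc_factor_integral {t : ℝ} (ht : t < 1/2) (a : ℝ) :
    ∫ z, Real.exp (t * (z + a)^2) ∂(gaussianReal 0 1)
      = Real.exp (t * a^2 / (1 - 2*t)) * (Real.sqrt (1 - 2*t))⁻¹ := by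
  have hb : (0:ℝ) < 1/2 - t := by linarith
  rw [nc_gaussianReal_integral_eq]
  simp_rw [fun x => nc_factor_pointwise ht a x]
  rw [integral_const_mul, nc_gauss_shift_integral hb]
  have hπ : (0:ℝ) < π := Real.pi_pos
  have h1 : (Real.sqrt (2*π))⁻¹ * Real.sqrt (π / (1/2 - t)) = (Real.sqrt (1 - 2*t))⁻¹ := by
    rw [← Real.sqrt_inv, ← Real.sqrt_mul (by positivity), ← Real.sqrt_inv]
    congr 1
    have h2t : (1:ℝ) - 2*t ≠ 0 := by linarith
    have hπ' : π ≠ 0 := Real.pi_ne_zero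
    field_simp
  linear_combination Real.exp (t * a^2 / (1 - 2*t)) * h1

lemma nc_pi_exp_integrable {k : ℕ} {t : ℝ} (ht : t < 1/2) (a : Fin k → ℝ) :
    Integrable (fun z : Fin k → ℝ => Real.exp (t * ∑ j, (z j + a j)^2))
      (Measure.pi fun _ : Fin k => gaussianReal 0 1) := by
  letI : MeasureSpace ℝ := ⟨gaussianReal 0 1⟩
  haveI : IsProbabilityMeasure (volume : Measure ℝ) :=
    inferInstanceAs (IsProbabilityMeasure (gaussianReal 0 1))
  have h : (fun z : Fin k → ℝ => Real.exp (t * ∑ j, (z j + a j)^2))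
      = fun z : Fin k → ℝ => ∏ j, Real.exp (t * (z j + a j)^2) := by
    ext z
    rw [← Real.exp_sum, Finset.mul_sum]
  rw [h]
  exact Integrable.fintype_prod (f := fun j z => Real.exp (t * (z + a j)^2))
    (fun j => nc_factor_integrable ht (a j))

lemma nc_pi_exp_integral {k : ℕ} {t : ℝ} (ht : t < 1/2) (a : Fin k → ℝ) :
    ∫ z, Real.exp (t * ∑ j, (z j + a j)^2) ∂(Measure.pi fun _ : Fin k => gaussianReal 0 1)
      = Real.exp (t * (∑ j, (a j)^2) / (1 - 2*t)) * ((Real.sqrt (1 - 2*t))⁻¹)^k := by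
  letI : MeasureSpace ℝ := ⟨gaussianReal 0 1⟩
  haveI : IsProbabilityMeasure (volume : Measure ℝ) :=
    inferInstanceAs (IsProbabilityMeasure (gaussianReal 0 1))
  have h : (fun z : Fin k → ℝ => Real.exp (t * ∑ j, (z j + a j)^2))
      = fun z : Fin k → ℝ => ∏ j, Real.exp (t * (z j + a j)^2) := by
    ext z
    rw [← Real.exp_sum, Finset.mul_sum]
  rw [h, show (Measure.pi fun _ : Fin k => gaussianReal 0 1)
      = (volume : Measure (Fin k → ℝ)) from rfl]
  have h2 := MeasureTheory.integral_fintype_prod_eq_prod (ι := Fin k)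
    (fun j (z : ℝ) => Real.exp (t * (z + a j)^2)) (μ := fun _ => (volume : Measure ℝ))
  rw [MeasureTheory.volume_pi, h2]
  rw [show (∏ i : Fin k, ∫ (x : ℝ), rexp (t * (x + a i) ^ 2))
      = ∏ i : Fin k, (Real.exp (t * (a i)^2 / (1 - 2*t)) * (Real.sqrt (1 - 2*t))⁻¹) from
    Finset.prod_congr rfl (fun j _ => nc_factor_integral ht (a j))]
  rw [Finset.prod_mul_distrib, ← Real.exp_sum, Finset.prod_const, Finset.card_univ,
    Fintype.card_fin]
  congr 1
  rw [Finset.mul_sum, Finset.sum_div]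

lemma nc_sum_measurable (k : ℕ) (δ : ℝ) :
    Measurable (fun z : Fin k → ℝ => ∑ j, (z j + if (j : ℕ) = 0 then δ else 0) ^ 2) :=
  Finset.measurable_sum _ fun j _ => ((measurable_pi_apply j).add_const _).pow_const 2

lemma nc_sum_if_sq {k : ℕ} (hk : 1 ≤ k) (δ : ℝ) :
    (∑ j : Fin k, (if (j : ℕ) = 0 then δ else 0)^2) = δ^2 := by
  haveI : NeZero k := ⟨by omega⟩
  have h : ∀ j : Fin k, ((j : ℕ) = 0) = (j = 0) := by
    intro j
    simp only [Fin.ext_iff, Fin.val_zero]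
  simp_rw [h, apply_ite (fun x : ℝ => x^2)]
  simp

lemma ncChiSq_Iic_le (k : ℕ) (δ t u : ℝ) (ht : t ≤ 0) :
    (ncChiSqLaw k δ (Set.Iic u)).toReal ≤
      Real.exp (-t * u) *
        (Real.exp (t * (∑ j : Fin k, (if (j : ℕ) = 0 then δ else 0)^2) / (1 - 2*t)) *
          ((Real.sqrt (1 - 2*t))⁻¹)^k) := by
  rw [ncChiSqLaw, Measure.map_apply (nc_sum_measurable k δ) measurableSet_Iic]
  have h := measure_le_le_exp_mul_mgf (μ := Measure.pi fun _ : Fin k => gaussianReal 0 1)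
    (X := fun z : Fin k → ℝ => ∑ j, (z j + if (j:ℕ)=0 then δ else 0)^2) u ht
    (nc_pi_exp_integrable (lt_of_le_of_lt ht one_half_pos) _)
  rw [mgf, nc_pi_exp_integral (lt_of_le_of_lt ht one_half_pos)] at h
  exact h

lemma ncChiSq_Ici_le (k : ℕ) (δ t u : ℝ) (ht : 0 ≤ t) (ht2 : t < 1/2) :
    (ncChiSqLaw k δ (Set.Ici u)).toReal ≤
      Real.exp (-t * u) *
        (Real.exp (t * (∑ j : Fin k, (if (j : ℕ) = 0 then δ else 0)^2) / (1 - 2*t)) *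
          ((Real.sqrt (1 - 2*t))⁻¹)^k) := by
  rw [ncChiSqLaw, Measure.map_apply (nc_sum_measurable k δ) measurableSet_Ici]
  have h := measure_ge_le_exp_mul_mgf (μ := Measure.pi fun _ : Fin k => gaussianReal 0 1)
    (X := fun z : Fin k → ℝ => ∑ j, (z j + if (j:ℕ)=0 then δ else 0)^2) u ht
    (nc_pi_exp_integrable ht2 _)
  rw [mgf, nc_pi_exp_integral ht2] at h
  exact h

lemma nc_inv_sqrt_pow (k : ℕ) {x : ℝ} (hx : 0 < x) :
    ((Real.sqrt x)⁻¹)^k = Real.exp (-((k:ℝ)/2) * Real.log x) := by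
  rw [Real.sqrt_eq_rpow, ← Real.rpow_neg_one (x ^ (1/2:ℝ)), ← Real.rpow_natCast (_ ^ (-1:ℝ)) k,
    ← Real.rpow_mul (Real.rpow_nonneg hx.le _), ← Real.rpow_mul hx.le,
    Real.rpow_def_of_pos hx]
  congr 1
  ring

lemma nc_exp_bound_low {k : ℕ} {L S t d2 u : ℝ}
    (hL : 0 < L) (hk1 : 1 ≤ (k:ℝ)) (hkL : 16*L ≤ (k:ℝ)) (hS2 : S^2 = (k:ℝ)*L) (hSpos : 0 < S)
    (ht : t = -(S/(k:ℝ))) (hd2 : 0 ≤ d2) (hu : u ≤ d2/4 + (k:ℝ) - 3*S) :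
    Real.exp (-t*u) * (Real.exp (t * d2 / (1-2*t)) * ((Real.sqrt (1-2*t))⁻¹)^k)
      ≤ Real.exp (-(L/2)) := by
  have hkpos : (0:ℝ) < k := by linarith
  subst ht
  set lam : ℝ := S/(k:ℝ) with hlam
  have hlampos : 0 < lam := div_pos hSpos hkpos
  have hklam : (k:ℝ) * lam = S := by rw [hlam]; field_simp
  have hlamS : lam * S = L := by
    rw [hlam, div_mul_eq_mul_div, div_eq_iff hkpos.ne']
    nlinarith [hS2]
  have hklam2 : (k:ℝ) * lam^2 = L := by
    rw [show (k:ℝ)*lam^2 = lam*((k:ℝ)*lam) by ring, hklam]; exact hlamS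
  have hSk : S ≤ (k:ℝ)/4 := by nlinarith
  have hlam14 : lam ≤ 1/4 := by rw [hlam, div_le_iff₀ hkpos]; linarith
  have h12 : (1:ℝ) - 2 * -lam = 1 + 2*lam := by ring
  have h12pos : (0:ℝ) < 1 + 2*lam := by linarith
  rw [h12, nc_inv_sqrt_pow k h12pos, ← Real.exp_add, ← Real.exp_add, Real.exp_le_exp]
  have hlog : 2*lam - 4*lam^2 ≤ Real.log (1+2*lam) := by
    have h1 := Real.one_sub_inv_le_log_of_pos h12pos
    have hinv : (1+2*lam) * (1+2*lam)⁻¹ = 1 := mul_inv_cancel₀ h12pos.ne'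
    nlinarith [mul_pos (mul_pos hlampos hlampos) hlampos, inv_pos.mpr h12pos]
  have hdiv : lam*d2/4 ≤ lam*d2/(1+2*lam) := by
    rw [div_le_div_iff₀ (by norm_num) h12pos]
    nlinarith [mul_nonneg hlampos.le hd2]
  have hr1 : lam*(d2/4 + (k:ℝ) - 3*S) = lam*d2/4 + S - 3*L := by
    linear_combination hklam - 3*hlamS
  have h1 : - -lam * u ≤ lam*d2/4 + S - 3*L := by
    rw [show - -lam * u = lam * u by ring]
    exact (mul_le_mul_of_nonneg_left hu hlampos.le).trans_eq hr1
  have h2 : -lam * d2 / (1+2*lam) ≤ -(lam*d2/4) := by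
    rw [neg_mul, neg_div]
    linarith
  have hr3 : ((k:ℝ)/2)*(2*lam - 4*lam^2) = S - 2*L := by
    linear_combination hklam - 2*hklam2
  have h3 : -((k:ℝ)/2) * Real.log (1+2*lam) ≤ -S + 2*L := by
    have h4 := mul_le_mul_of_nonneg_left hlog (by positivity : (0:ℝ) ≤ (k:ℝ)/2)
    rw [hr3] at h4
    linarith
  linarith

lemma nc_exp_bound_high {k : ℕ} {L S t d2 u : ℝ}
    (hL : 0 < L) (hk1 : 1 ≤ (k:ℝ)) (hkL : 16*L ≤ (k:ℝ)) (hS2 : S^2 = (k:ℝ)*L) (hSpos : 0 < S)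
    (ht : t = S/(2*(k:ℝ))) (hd2L : d2 ≤ L) (hu : (k:ℝ) + 3*S ≤ u) :
    Real.exp (-t*u) * (Real.exp (t * d2 / (1-2*t)) * ((Real.sqrt (1-2*t))⁻¹)^k)
      ≤ Real.exp (-(L/2)) := by
  have hkpos : (0:ℝ) < k := by linarith
  have htpos : 0 < t := by rw [ht]; positivity
  have hkt : (k:ℝ) * t = S/2 := by rw [ht]; field_simp
  have htS : t * S = L/2 := by
    rw [ht, div_mul_eq_mul_div, div_eq_div_iff (by positivity) (by norm_num : (2:ℝ) ≠ 0)]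
    nlinarith [hS2]
  have hkt2 : (k:ℝ) * t^2 = L/4 := by
    rw [show (k:ℝ)*t^2 = t*((k:ℝ)*t) by ring, hkt,
      show t*(S/2) = (t*S)/2 by ring, htS]; ring
  have hSk : S ≤ (k:ℝ)/4 := by nlinarith
  have hLS : 4*L ≤ S := by
    nlinarith [mul_nonneg hL.le (by linarith : (0:ℝ) ≤ (k:ℝ) - 16*L)]
  have ht18 : t ≤ 1/8 := by rw [ht, div_le_iff₀ (by linarith : (0:ℝ) < 2*k)]; linarith
  have h12pos : (0:ℝ) < 1 - 2*t := by linarith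
  rw [nc_inv_sqrt_pow k h12pos, ← Real.exp_add, ← Real.exp_add, Real.exp_le_exp]
  have hlog : -Real.log (1-2*t) ≤ 2*t + 6*t^2 := by
    have h1 := Real.one_sub_inv_le_log_of_pos h12pos
    have hinv : (1-2*t) * (1-2*t)⁻¹ = 1 := mul_inv_cancel₀ h12pos.ne'
    nlinarith [mul_pos (mul_pos htpos htpos) htpos, inv_pos.mpr h12pos]
  have htL : t*L ≤ L/8 := by nlinarith [mul_le_mul_of_nonneg_right ht18 hL.le]
  have hdiv : t * d2 / (1-2*t) ≤ L/6 := by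
    rw [div_le_iff₀ h12pos]
    have htd2 : t * d2 ≤ t * L := mul_le_mul_of_nonneg_left hd2L htpos.le
    nlinarith
  have hr1 : t*((k:ℝ) + 3*S) = S/2 + (3/2)*L := by
    linear_combination hkt + 3*htS
  have h1 : S/2 + (3/2)*L ≤ t*u := by
    rw [← hr1]
    exact mul_le_mul_of_nonneg_left hu htpos.le
  have hr3 : ((k:ℝ)/2)*(2*t + 6*t^2) = S/2 + (3/4)*L := by
    linear_combination hkt + 3*hkt2
  have h3 : -((k:ℝ)/2) * Real.log (1-2*t) ≤ S/2 + (3/4)*L := by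
    have h4 := mul_le_mul_of_nonneg_left hlog (by positivity : (0:ℝ) ≤ (k:ℝ)/2)
    rw [hr3] at h4
    linarith
  linarith

end Aux

theorem noncentral_chi_squared_max_min_bound :
    ∃ C₁ : ℝ, 0 < C₁ ∧
      ∀ (m k : ℕ), 2 ≤ m → 1 ≤ k →
        ∀ δ : Fin m → ℝ, (∀ i, 0 ≤ δ i) →
          ∀ (Ω : Type) (_ : MeasurableSpace Ω) (P : Measure Ω), IsProbabilityMeasure P →
            ∀ X : Fin m → Ω → ℝ, (∀ i, Measurable (X i)) →
              (∀ i, Measure.map (X i) P = ncChiSqLaw k (δ i)) →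
              ∀ C : ℝ, C₁ < C → (16 : ℝ) * C * Real.log m ≤ k →
                ((2 * Real.sqrt (C * Real.log m) ≤ ⨅ i : Fin m, δ i →
                  P {ω | (⨅ i : Fin m, X i ω) <
                      (⨅ i : Fin m, δ i) ^ 2 / 4 + k - 3 * Real.sqrt (C * k * Real.log m)} ≤
                    ENNReal.ofReal (2 * (m : ℝ) ^ ((1 : ℝ) - C / 2))) ∧
                ((⨆ i : Fin m, δ i) ≤ Real.sqrt (C * Real.log m) →
                  P {ω | (k : ℝ) + 3 * Real.sqrt (C * k * Real.log m) <
                      ⨆ i : Fin m, X i ω} ≤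
                    ENNReal.ofReal ((m : ℝ) ^ ((1 : ℝ) - C / 2)))) := by
  refine ⟨1, one_pos, ?_⟩
  intro m k hm hk δ hδ0 Ω inst P hP X hXmeas hXlaw C hC hkC
  haveI : Nonempty (Fin m) := ⟨⟨0, by omega⟩⟩
  have hm1 : (1:ℝ) < (m:ℝ) := by exact_mod_cast lt_of_lt_of_le one_lt_two hm
  have hmpos : (0:ℝ) < (m:ℝ) := by linarith
  have hlogm : 0 < Real.log m := Real.log_pos hm1
  have hCpos : 0 < C := by linarith
  have hk1 : (1:ℝ) ≤ (k:ℝ) := by exact_mod_cast hk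
  set L : ℝ := C * Real.log m with hLdef
  have hLpos : 0 < L := mul_pos hCpos hlogm
  have hkL : 16*L ≤ (k:ℝ) := by rw [hLdef, ← mul_assoc]; exact hkC
  set S : ℝ := Real.sqrt (C * k * Real.log m) with hSdef
  have hS2 : S^2 = (k:ℝ)*L := by
    rw [hSdef, Real.sq_sqrt (by positivity), hLdef]; ring
  have hSpos : 0 < S := Real.sqrt_pos.mpr (by positivity)
  have hmC : (m:ℝ) * Real.exp (-(L/2)) = (m:ℝ) ^ ((1:ℝ) - C/2) := by
    rw [Real.rpow_def_of_pos hmpos,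
      show Real.log (m:ℝ) * (1 - C/2) = Real.log m + (-(L/2)) by rw [hLdef]; ring,
      Real.exp_add, Real.exp_log hmpos]
  have hsumle : ∀ (A : Fin m → Set Ω),
      (∀ i, P (A i) ≤ ENNReal.ofReal (Real.exp (-(L/2)))) →
      P (⋃ i, A i) ≤ ENNReal.ofReal ((m:ℝ) * Real.exp (-(L/2))) := by
    intro A hA
    calc P (⋃ i, A i) ≤ ∑ i, P (A i) := measure_iUnion_fintype_le _ _
      _ ≤ ∑ _i : Fin m, ENNReal.ofReal (Real.exp (-(L/2))) :=
        Finset.sum_le_sum fun i _ => hA i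
      _ = (m : ℝ≥0∞) * ENNReal.ofReal (Real.exp (-(L/2))) := by
        rw [Finset.sum_const, Finset.card_univ, Fintype.card_fin, nsmul_eq_mul]
      _ = ENNReal.ofReal ((m:ℝ) * Real.exp (-(L/2))) := by
        rw [ENNReal.ofReal_mul (by positivity), ENNReal.ofReal_natCast]
  constructor
  · -- part (a)
    intro hmin
    set u : ℝ := (⨅ i : Fin m, δ i) ^ 2 / 4 + k - 3*S with hu
    have hinf_nonneg : 0 ≤ ⨅ i : Fin m, δ i := le_ciInf hδ0
    have hA : ∀ i, P {ω | X i ω ≤ u} ≤ ENNReal.ofReal (Real.exp (-(L/2))) := by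
      intro i
      rw [ENNReal.le_ofReal_iff_toReal_le (measure_ne_top P _) (Real.exp_nonneg _)]
      have hmap : P {ω | X i ω ≤ u} = ncChiSqLaw k (δ i) (Set.Iic u) := by
        rw [← hXlaw i, Measure.map_apply (hXmeas i) measurableSet_Iic]
        rfl
      rw [hmap]
      refine le_trans (ncChiSq_Iic_le k (δ i) (-(S/(k:ℝ))) u
        (neg_nonpos.mpr (by positivity))) ?_
      rw [nc_sum_if_sq hk (δ i)]
      refine nc_exp_bound_low hLpos hk1 hkL hS2 hSpos rfl (sq_nonneg _) ?_
      have h1 : (⨅ j : Fin m, δ j) ≤ δ i := ciInf_le (Finite.bddBelow_range _) i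
      have h2 : (⨅ j : Fin m, δ j)^2 ≤ (δ i)^2 := pow_le_pow_left₀ hinf_nonneg h1 2
      rw [hu]
      linarith
    have hsub : {ω | (⨅ i : Fin m, X i ω) < u} ⊆ ⋃ i, {ω | X i ω ≤ u} := by
      intro ω hω
      obtain ⟨i, hi⟩ := exists_eq_ciInf_of_finite (f := fun i => X i ω)
      exact Set.mem_iUnion.mpr ⟨i, le_of_lt (lt_of_eq_of_lt hi hω)⟩
    refine le_trans (measure_mono hsub) (le_trans (hsumle _ hA) ?_)
    refine ENNReal.ofReal_le_ofReal ?_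
    rw [hmC]
    nlinarith [Real.rpow_nonneg hmpos.le ((1:ℝ) - C/2)]
  · -- part (b)
    intro hmax
    set v : ℝ := (k:ℝ) + 3*S with hv
    have hB : ∀ i, P {ω | v ≤ X i ω} ≤ ENNReal.ofReal (Real.exp (-(L/2))) := by
      intro i
      rw [ENNReal.le_ofReal_iff_toReal_le (measure_ne_top P _) (Real.exp_nonneg _)]
      have hmap : P {ω | v ≤ X i ω} = ncChiSqLaw k (δ i) (Set.Ici v) := by
        rw [← hXlaw i, Measure.map_apply (hXmeas i) measurableSet_Ici]
        rfl
      rw [hmap]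
      have hSk : S ≤ (k:ℝ)/4 := by nlinarith
      refine le_trans (ncChiSq_Ici_le k (δ i) (S/(2*(k:ℝ))) v (by positivity) ?_) ?_
      · rw [div_lt_iff₀ (by positivity : (0:ℝ) < 2*(k:ℝ))]
        nlinarith
      rw [nc_sum_if_sq hk (δ i)]
      refine nc_exp_bound_high hLpos hk1 hkL hS2 hSpos rfl ?_ (le_refl _)
      have h1 : δ i ≤ ⨆ j : Fin m, δ j := le_ciSup (Finite.bddAbove_range _) i
      have h2 : δ i ≤ Real.sqrt L := le_trans h1 hmax
      have h3 : (δ i)^2 ≤ (Real.sqrt L)^2 := pow_le_pow_left₀ (hδ0 i) h2 2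
      rwa [Real.sq_sqrt hLpos.le] at h3
    have hsub : {ω | v < ⨆ i : Fin m, X i ω} ⊆ ⋃ i, {ω | v ≤ X i ω} := by
      intro ω hω
      obtain ⟨i, hi⟩ := exists_eq_ciSup_of_finite (f := fun i => X i ω)
      exact Set.mem_iUnion.mpr ⟨i, le_of_lt (lt_of_lt_of_eq hω hi.symm)⟩
    refine le_trans (measure_mono hsub) (le_trans (hsumle _ hB) ?_)
    exact le_of_eq (by rw [hmC])

end
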